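/- Let W : GL⁺(2) → ℝ and suppose there exists a non-decreasing convex function h : [1,∞) → ℝ such that W(F) = h(‖F‖_op² / det F) for all F ∈ GL⁺(2), where ‖F‖_op denotes the operator norm of F induced by the Euclidean norm on ℝ². Then W is polyconvex. -/

import Mathlib

open Matrix Set

noncomputable section

/-- The space of real 2×2 matrices. -/
abbrev Mat2 : Type := Matrix (Fin 2) (Fin 2) ℝ

/-- The special orthogonal group SO(2): orthogonal 2×2 matrices with determinant 1. -/
def SO2 : Set Mat2 := {Q : Mat2 | Qᵀ * Q = 1 ∧ Q.det = 1}

/-- A function `W` (viewed on GL⁺(2) = {F | 0 < det F}) is polyconvex if there is a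
convex function `P : ℝ^{2×2} × ℝ → ℝ ∪ {+∞}` with `W F = P (F, det F)` on GL⁺(2). -/
def Polyconvex (W : Mat2 → ℝ) : Prop :=
  ∃ P : Mat2 × ℝ → EReal,
    (∀ x y : Mat2 × ℝ, ∀ a b : ℝ, 0 ≤ a → 0 ≤ b → a + b = 1 →
      P (a • x + b • y) ≤ (a : EReal) * P x + (b : EReal) * P y) ∧
    (∀ F : Mat2, 0 < F.det → (W F : EReal) = P (F, F.det))

/-- Rank-one convexity of `W` on GL⁺(2): convexity along rank-one line segments
lying in GL⁺(2). -/
def RankOneConvex (W : Mat2 → ℝ) : Prop :=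
  ∀ F : Mat2, 0 < F.det → ∀ ξ η : Fin 2 → ℝ, ∀ θ : ℝ, θ ∈ Set.Icc (0:ℝ) 1 →
    (∀ t ∈ Set.Icc (0:ℝ) 1, 0 < (F + t • vecMulVec ξ η).det) →
    W (F + (1 - θ) • vecMulVec ξ η) ≤ θ * W F + (1 - θ) * W (F + vecMulVec ξ η)

/-- Objectivity and isotropy: bi-SO(2)-invariance on GL⁺(2). -/
def ObjectiveIsotropic (W : Mat2 → ℝ) : Prop :=
  ∀ F : Mat2, 0 < F.det → ∀ Q₁ Q₂ : Mat2, Q₁ ∈ SO2 → Q₂ ∈ SO2 →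
    W (Q₁ * F * Q₂) = W F

/-- Isochoric: invariance under positive scaling on GL⁺(2). -/
def Isochoric (W : Mat2 → ℝ) : Prop :=
  ∀ F : Mat2, 0 < F.det → ∀ a : ℝ, 0 < a → W (a • F) = W F

/-- The 2×2 diagonal matrix diag(a, b). -/
def diag2 (a b : ℝ) : Mat2 := !![a, 0; 0, b]

/-- The squared Frobenius norm of a 2×2 matrix. -/
def frobSq (F : Mat2) : ℝ := ∑ i, ∑ j, (F i j) ^ 2

/-- The operator norm of `F` induced by the Euclidean norm on ℝ²:
the supremum of ‖F·x‖ over Euclidean-unit vectors x. -/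
def opNorm2 (F : Mat2) : ℝ :=
  sSup {r : ℝ | ∃ x : Fin 2 → ℝ, (x 0) ^ 2 + (x 1) ^ 2 = 1 ∧
    r = Real.sqrt ((F.mulVec x 0) ^ 2 + (F.mulVec x 1) ^ 2)}

namespace PolyAux

def n2 (v : Fin 2 → ℝ) : ℝ := Real.sqrt (v 0 ^ 2 + v 1 ^ 2)

lemma n2_nonneg (v : Fin 2 → ℝ) : 0 ≤ n2 v := Real.sqrt_nonneg _

lemma sq_n2 (v : Fin 2 → ℝ) : n2 v ^ 2 = v 0 ^ 2 + v 1 ^ 2 := Real.sq_sqrt (by positivity)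

lemma le_n2_mul (u v : Fin 2 → ℝ) (p : ℝ)
    (hp : p ^ 2 ≤ (u 0 ^ 2 + u 1 ^ 2) * (v 0 ^ 2 + v 1 ^ 2)) : p ≤ n2 u * n2 v := by
  have h1 : p ≤ |p| := le_abs_self p
  have h2 : |p| = Real.sqrt (p ^ 2) := (Real.sqrt_sq_eq_abs p).symm
  have h3 : Real.sqrt (p ^ 2) ≤ Real.sqrt ((u 0 ^ 2 + u 1 ^ 2) * (v 0 ^ 2 + v 1 ^ 2)) :=
    Real.sqrt_le_sqrt hp
  have h4 : Real.sqrt ((u 0 ^ 2 + u 1 ^ 2) * (v 0 ^ 2 + v 1 ^ 2)) = n2 u * n2 v := by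
    rw [Real.sqrt_mul (by positivity)]; rfl
  linarith
lemma n2_add_le (u v : Fin 2 → ℝ) : n2 (u + v) ≤ n2 u + n2 v := by
  have hdot : u 0 * v 0 + u 1 * v 1 ≤ n2 u * n2 v :=
    le_n2_mul u v _ (by nlinarith [sq_nonneg (u 0 * v 1 - u 1 * v 0)])
  have h1 : n2 (u + v) = Real.sqrt ((u 0 + v 0) ^ 2 + (u 1 + v 1) ^ 2) := rfl
  rw [h1]
  have h2 : (u 0 + v 0) ^ 2 + (u 1 + v 1) ^ 2 ≤ (n2 u + n2 v) ^ 2 := by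
    have := sq_n2 u; have := sq_n2 v; nlinarith
  calc Real.sqrt ((u 0 + v 0) ^ 2 + (u 1 + v 1) ^ 2)
      ≤ Real.sqrt ((n2 u + n2 v) ^ 2) := Real.sqrt_le_sqrt h2
    _ = n2 u + n2 v := Real.sqrt_sq (add_nonneg (n2_nonneg u) (n2_nonneg v))

lemma n2_smul (a : ℝ) (ha : 0 ≤ a) (v : Fin 2 → ℝ) : n2 (a • v) = a * n2 v := by
  unfold n2
  have : (a • v) 0 ^ 2 + (a • v) 1 ^ 2 = a ^ 2 * (v 0 ^ 2 + v 1 ^ 2) := by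
    simp [smul_eq_mul]; ring
  rw [this, Real.sqrt_mul (sq_nonneg a), Real.sqrt_sq ha]

def S (F : Mat2) : Set ℝ :=
  {r : ℝ | ∃ x : Fin 2 → ℝ, (x 0) ^ 2 + (x 1) ^ 2 = 1 ∧
    r = Real.sqrt ((F.mulVec x 0) ^ 2 + (F.mulVec x 1) ^ 2)}

lemma opNorm2_eq (F : Mat2) : opNorm2 F = sSup (S F) := rfl

lemma S_nonempty (F : Mat2) : (S F).Nonempty :=
  ⟨_, ![1, 0], by norm_num, rfl⟩

lemma mulVec_apply (F : Mat2) (x : Fin 2 → ℝ) (i : Fin 2) :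
    F.mulVec x i = F i 0 * x 0 + F i 1 * x 1 := by
  simp [Matrix.mulVec, dotProduct, Fin.sum_univ_two]

lemma S_bddAbove (F : Mat2) : BddAbove (S F) := by
  refine ⟨Real.sqrt (F 0 0 ^ 2 + F 0 1 ^ 2 + F 1 0 ^ 2 + F 1 1 ^ 2), ?_⟩
  rintro r ⟨x, hx, rfl⟩
  apply Real.sqrt_le_sqrt
  rw [mulVec_apply, mulVec_apply]
  nlinarith [sq_nonneg (F 0 0 * x 1 - F 0 1 * x 0), sq_nonneg (F 1 0 * x 1 - F 1 1 * x 0),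
    sq_nonneg (x 0), sq_nonneg (x 1), sq_nonneg (F 0 0), sq_nonneg (F 0 1),
    sq_nonneg (F 1 0), sq_nonneg (F 1 1)]

lemma n2_le_opNorm2 (F : Mat2) (x : Fin 2 → ℝ) (hx : (x 0) ^ 2 + (x 1) ^ 2 = 1) :
    n2 (F.mulVec x) ≤ opNorm2 F :=
  le_csSup (S_bddAbove F) ⟨x, hx, rfl⟩

lemma opNorm2_nonneg (F : Mat2) : 0 ≤ opNorm2 F :=
  le_trans (n2_nonneg _) (n2_le_opNorm2 F ![1,0] (by norm_num))

lemma opNorm2_combo (F G : Mat2) (a b : ℝ) (ha : 0 ≤ a) (hb : 0 ≤ b) :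
    opNorm2 (a • F + b • G) ≤ a * opNorm2 F + b * opNorm2 G := by
  rw [opNorm2_eq]
  apply csSup_le (S_nonempty _)
  rintro r ⟨x, hx, rfl⟩
  have hmv : (a • F + b • G).mulVec x = a • F.mulVec x + b • G.mulVec x := by
    rw [Matrix.add_mulVec, Matrix.smul_mulVec, Matrix.smul_mulVec]
  have : Real.sqrt (((a • F + b • G).mulVec x 0) ^ 2 + ((a • F + b • G).mulVec x 1) ^ 2)
      = n2 ((a • F + b • G).mulVec x) := rfl
  rw [this, hmv]
  calc n2 (a • F.mulVec x + b • G.mulVec x)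
      ≤ n2 (a • F.mulVec x) + n2 (b • G.mulVec x) := n2_add_le _ _
    _ = a * n2 (F.mulVec x) + b * n2 (G.mulVec x) := by rw [n2_smul a ha, n2_smul b hb]
    _ ≤ a * opNorm2 F + b * opNorm2 G := by
        gcongr <;> [exact n2_le_opNorm2 F x hx; exact n2_le_opNorm2 G x hx]

lemma det_le_opNorm2_sq (F : Mat2) : F.det ≤ opNorm2 F ^ 2 := by
  have h0 : F.mulVec ![1,0] = fun i => F i 0 := by
    funext i; rw [mulVec_apply]; norm_num
  have h1 : F.mulVec ![0,1] = fun i => F i 1 := by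
    funext i; rw [mulVec_apply]; norm_num
  have hd : F.det = F 0 0 * F 1 1 - F 0 1 * F 1 0 := Matrix.det_fin_two F
  have key : F.det ≤ n2 (F.mulVec ![1,0]) * n2 (F.mulVec ![0,1]) := by
    rw [h0, h1]
    apply le_n2_mul (fun i => F i 0) (fun i => F i 1)
    show F.det ^ 2 ≤ (F 0 0 ^ 2 + F 1 0 ^ 2) * (F 0 1 ^ 2 + F 1 1 ^ 2)
    rw [hd]
    nlinarith [sq_nonneg (F 0 0 * F 0 1 + F 1 0 * F 1 1)]
  calc F.det ≤ n2 (F.mulVec ![1,0]) * n2 (F.mulVec ![0,1]) := key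
    _ ≤ opNorm2 F * opNorm2 F :=
        mul_le_mul (n2_le_opNorm2 F _ (by norm_num)) (n2_le_opNorm2 F _ (by norm_num))
          (n2_nonneg _) (opNorm2_nonneg F)
    _ = opNorm2 F ^ 2 := (sq (opNorm2 F)).symm

end PolyAux

namespace PolyAux

lemma phi_mono (h : ℝ → ℝ) (hh_mono : MonotoneOn h (Set.Ici (1:ℝ))) {s t : ℝ} (hst : s ≤ t) :
    h (max 1 s) ≤ h (max 1 t) :=
  hh_mono (le_max_left 1 s) (le_max_left 1 t) (max_le_max le_rfl hst)

lemma phi_combo (h : ℝ → ℝ) (hh_mono : MonotoneOn h (Set.Ici (1:ℝ)))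
    (hh_conv : ConvexOn ℝ (Set.Ici (1:ℝ)) h) {s t a b : ℝ}
    (ha : 0 ≤ a) (hb : 0 ≤ b) (hab : a + b = 1) :
    h (max 1 (a * s + b * t)) ≤ a * h (max 1 s) + b * h (max 1 t) := by
  have hm1 : (1:ℝ) ≤ max 1 s := le_max_left _ _
  have hm2 : (1:ℝ) ≤ max 1 t := le_max_left _ _
  have hmem : (1:ℝ) ≤ a * max 1 s + b * max 1 t := by nlinarith
  have hle : max 1 (a * s + b * t) ≤ a * max 1 s + b * max 1 t := by
    apply max_le hmem
    have h1 : a * s ≤ a * max 1 s := mul_le_mul_of_nonneg_left (le_max_right _ _) ha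
    have h2 : b * t ≤ b * max 1 t := mul_le_mul_of_nonneg_left (le_max_right _ _) hb
    linarith
  calc h (max 1 (a * s + b * t)) ≤ h (a * max 1 s + b * max 1 t) :=
        hh_mono (Set.mem_Ici.2 (le_max_left _ _)) hmem hle
    _ ≤ a * h (max 1 s) + b * h (max 1 t) := by
        simpa [smul_eq_mul] using hh_conv.2 hm1 hm2 ha hb hab

lemma convpos {d1 d2 a b : ℝ} (hd1 : 0 < d1) (hd2 : 0 < d2) (ha : 0 ≤ a) (hb : 0 ≤ b)
    (hab : a + b = 1) : 0 < a * d1 + b * d2 := by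
  rcases lt_or_ge 0 a with ha0 | ha0
  · nlinarith [mul_pos ha0 hd1, mul_nonneg hb hd2.le]
  · have ha0' : a = 0 := le_antisymm ha0 ha
    have hb1 : b = 1 := by linarith
    rw [ha0', hb1]; linarith

lemma qol {u v d1 d2 a b : ℝ} (hd1 : 0 < d1) (hd2 : 0 < d2) (ha : 0 ≤ a) (hb : 0 ≤ b)
    (hab : a + b = 1) :
    (a * u + b * v) ^ 2 / (a * d1 + b * d2) ≤ a * (u ^ 2 / d1) + b * (v ^ 2 / d2) := by
  have hd : 0 < a * d1 + b * d2 := convpos hd1 hd2 ha hb hab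
  have e1 : a * (u ^ 2 / d1) + b * (v ^ 2 / d2) = (a * u ^ 2 * d2 + b * v ^ 2 * d1) / (d1 * d2) := by
    field_simp
  rw [e1, div_le_div_iff₀ hd (by positivity)]
  nlinarith [mul_nonneg (mul_nonneg ha hb) (sq_nonneg (u * d2 - v * d1))]

lemma core (h : ℝ → ℝ) (hh_mono : MonotoneOn h (Set.Ici (1:ℝ)))
    (hh_conv : ConvexOn ℝ (Set.Ici (1:ℝ)) h) {N1 N2 Nb d1 d2 a b : ℝ}
    (hd1 : 0 < d1) (hd2 : 0 < d2) (ha : 0 ≤ a) (hb : 0 ≤ b) (hab : a + b = 1)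
    (hNb0 : 0 ≤ Nb) (hNb : Nb ≤ a * N1 + b * N2) :
    h (max 1 (Nb ^ 2 / (a * d1 + b * d2))) ≤
      a * h (max 1 (N1 ^ 2 / d1)) + b * h (max 1 (N2 ^ 2 / d2)) := by
  have hd : 0 < a * d1 + b * d2 := convpos hd1 hd2 ha hb hab
  have s1 : Nb ^ 2 / (a * d1 + b * d2) ≤ (a * N1 + b * N2) ^ 2 / (a * d1 + b * d2) :=
    (div_le_div_iff_of_pos_right hd).2 (pow_le_pow_left₀ hNb0 hNb 2)
  have s2 := qol (u := N1) (v := N2) hd1 hd2 ha hb hab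
  calc h (max 1 (Nb ^ 2 / (a * d1 + b * d2)))
      ≤ h (max 1 (a * (N1 ^ 2 / d1) + b * (N2 ^ 2 / d2))) := phi_mono h hh_mono (s1.trans s2)
    _ ≤ a * h (max 1 (N1 ^ 2 / d1)) + b * h (max 1 (N2 ^ 2 / d2)) :=
        phi_combo h hh_mono hh_conv ha hb hab

lemma mul_ne_bot' (a : ℝ) (ha : 0 < a) (z : EReal) (hz : z ≠ ⊥) : (a : EReal) * z ≠ ⊥ := by
  induction z using EReal.rec with
  | bot => exact absurd rfl hz
  | coe r => rw [← EReal.coe_mul]; exact EReal.coe_ne_bot _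
  | top => rw [EReal.mul_top_of_pos (by exact_mod_cast ha)]; exact bot_lt_top.ne'

end PolyAux

open PolyAux

/-- If `W F = h(‖F‖_op²/det F)` on GL⁺(2) for some non-decreasing
convex `h : [1,∞) → ℝ`, then `W` is polyconvex. -/
theorem polyconvex_of_monotone_convex_of_opNormSq_div_det (W : Mat2 → ℝ) (h : ℝ → ℝ)
    (hh_mono : MonotoneOn h (Set.Ici (1:ℝ)))
    (hh_conv : ConvexOn ℝ (Set.Ici (1:ℝ)) h)
    (hWh : ∀ F : Mat2, 0 < F.det → W F = h ((opNorm2 F) ^ 2 / F.det)) :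
    Polyconvex W := by
  classical
  refine ⟨fun p => if 0 < p.2 then ((h (max 1 (opNorm2 p.1 ^ 2 / p.2)) : ℝ) : EReal) else ⊤,
    ?_, ?_⟩
  · intro x y a b ha hb hab
    dsimp only
    have Pne : ∀ p : Mat2 × ℝ,
        (if 0 < p.2 then ((h (max 1 (opNorm2 p.1 ^ 2 / p.2)) : ℝ) : EReal) else ⊤) ≠ ⊥ := by
      intro p; split
      · exact EReal.coe_ne_bot _
      · exact bot_lt_top.ne'
    rcases eq_or_lt_of_le ha with ha0 | ha'
    · have hb1 : b = 1 := by linarith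
      subst hb1
      rw [← ha0]
      simp only [zero_smul, one_smul, zero_add, EReal.coe_zero, EReal.coe_one, zero_mul, one_mul]
      exact le_rfl
    · rcases eq_or_lt_of_le hb with hb0 | hb'
      · have ha1 : a = 1 := by linarith
        subst ha1
        rw [← hb0]
        simp only [zero_smul, one_smul, add_zero, EReal.coe_zero, EReal.coe_one, zero_mul,
          one_mul]
        exact le_rfl
      · by_cases h1 : 0 < x.2
        · by_cases h2 : 0 < y.2
          · have hsnd : (a • x + b • y).2 = a * x.2 + b * y.2 := rfl
            have hfst : (a • x + b • y).1 = a • x.1 + b • y.1 := rfl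
            rw [hfst, hsnd]
            have hd : 0 < a * x.2 + b * y.2 := convpos h1 h2 ha hb hab
            rw [if_pos hd, if_pos h1, if_pos h2, ← EReal.coe_mul, ← EReal.coe_mul,
              ← EReal.coe_add, EReal.coe_le_coe_iff]
            exact core h hh_mono hh_conv h1 h2 ha hb hab (opNorm2_nonneg _)
              (opNorm2_combo x.1 y.1 a b ha hb)
          · rw [if_neg h2, EReal.mul_top_of_pos (by exact_mod_cast hb' : (0:EReal) < (b:EReal)),
              EReal.add_top_of_ne_bot (mul_ne_bot' a ha' _ (Pne x))]
            exact le_top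
        · rw [if_neg h1, EReal.mul_top_of_pos (by exact_mod_cast ha' : (0:EReal) < (a:EReal)),
            EReal.top_add_of_ne_bot (mul_ne_bot' b hb' _ (Pne y))]
          exact le_top
  · intro F hF
    have hmax : max 1 (opNorm2 F ^ 2 / F.det) = opNorm2 F ^ 2 / F.det :=
      max_eq_right ((one_le_div hF).2 (det_le_opNorm2_sq F))
    simp only [if_pos hF, hmax, hWh F hF]
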